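/- Let f(x) = min_{i∈I} max_{j∈J_i} (⟨a_{ij}, x⟩ + b_{ij}) be a piecewise affine min–max function on an open set X ⊆ ℝⁿ (I and all J_i finite). Then for every x̄ ∈ X, ⋃_{p∈S, f'(x̄;p)>0} ⋂_{i∈I(x̄,p)} Argmax_{v∈∂f_i(x̄)} ⟨v,p⟩ = Limsup_{x→x̄, f(x)>f(x̄)} ∂f(x) (no closure needed). -/

import Mathlib

set_option linter.unusedSectionVars false
set_option maxHeartbeats 1000000


open Filter Topology Set Metric
open scoped RealInnerProductSpace

noncomputable section

/-- `n`-dimensional Euclidean space. -/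
abbrev En (n : ℕ) := EuclideanSpace ℝ (Fin n)

/-- `d` is the Hadamard directional derivative map of `f` at `x`:
for each direction `p`, `(f (x + t • p') - f x)/t → d p` as `t ↓ 0`, `p' → p`. -/
def HadamardDD {n : ℕ} (f : En n → ℝ) (x : En n) (d : En n → ℝ) : Prop :=
  ∀ p : En n,
    Tendsto (fun q : ℝ × En n => (f (x + q.1 • q.2) - f x) / q.1)
      ((𝓝[>] (0 : ℝ)) ×ˢ 𝓝 p) (𝓝 (d p))

/-- The Fréchet subdifferential of `f` at `x`. -/
def FSubdiff {n : ℕ} (f : En n → ℝ) (x : En n) : Set (En n) :=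
  {v | ∀ ε > (0 : ℝ), ∀ᶠ y in 𝓝 x, f y - f x - ⟪v, y - x⟫ ≥ -ε * ‖y - x‖}

/-- The outer (Painlevé–Kuratowski) limit of Fréchet subdifferentials of `f`
along sequences `x_k → xb` with `f x_k > f xb`. -/
def OuterLim {n : ℕ} (f : En n → ℝ) (xb : En n) : Set (En n) :=
  {y | ∃ xk yk : ℕ → En n, Tendsto xk atTop (𝓝 xb) ∧ (∀ k, f xb < f (xk k)) ∧
    (∀ k, yk k ∈ FSubdiff f (xk k)) ∧ Tendsto yk atTop (𝓝 y)}

namespace PAaux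

lemma lip_tendsto {n : ℕ} {F : En n → ℝ} {C : ℝ}
    (hlip : ∀ x x' : En n, F x ≤ F x' + C * ‖x - x'‖)
    {x : ℕ → En n} {x0 : En n} (hx : Tendsto x atTop (𝓝 x0)) :
    Tendsto (fun k => F (x k)) atTop (𝓝 (F x0)) := by
  rw [← tendsto_sub_nhds_zero_iff]
  apply squeeze_zero_norm (a := fun k => C * ‖x k - x0‖)
  · intro k
    rw [Real.norm_eq_abs, abs_le]
    constructor
    · have h1 := hlip x0 (x k)
      have h2 : C * ‖x0 - x k‖ = C * ‖x k - x0‖ := by rw [norm_sub_rev]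
      linarith
    · linarith [hlip (x k) x0]
  · have h1 : Tendsto (fun k => ‖x k - x0‖) atTop (𝓝 0) := by
      rw [← tendsto_sub_nhds_zero_iff] at hx
      simpa using hx.norm
    simpa using h1.const_mul C

open Classical in
/-- active index set of a max-affine function at a point -/
def actF {n : ℕ} {κ : Type*} [Fintype κ] (A : κ → En n) (B : κ → ℝ) (g : En n → ℝ)
    (x : En n) : Finset κ :=
  Finset.univ.filter (fun j => ⟪A j, x⟫ + B j = g x)

variable {n : ℕ} {κ : Type*} [Fintype κ] {A : κ → En n} {B : κ → ℝ} {g : En n → ℝ}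

lemma mem_actF {x : En n} {j : κ} : j ∈ actF A B g x ↔ ⟪A j, x⟫ + B j = g x := by
  simp [actF]

lemma affine_le (hg : ∀ x, IsGreatest (Set.range fun j => ⟪A j, x⟫ + B j) (g x))
    (x : En n) (j : κ) : ⟪A j, x⟫ + B j ≤ g x := (hg x).2 ⟨j, rfl⟩

lemma actF_nonempty (hg : ∀ x, IsGreatest (Set.range fun j => ⟪A j, x⟫ + B j) (g x))
    (x : En n) : (actF A B g x).Nonempty := by
  obtain ⟨j, hj⟩ := (hg x).1
  exact ⟨j, mem_actF.2 hj⟩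

/-- local linearization (directional derivative function) at a point -/
def ddF (hg : ∀ x, IsGreatest (Set.range fun j => ⟪A j, x⟫ + B j) (g x))
    (x u : En n) : ℝ :=
  (actF A B g x).sup' (actF_nonempty hg x) (fun j => ⟪A j, u⟫)

lemma exists_normbound : ∃ C : ℝ, 0 ≤ C ∧ ∀ j : κ, ‖A j‖ ≤ C := by
  refine ⟨((Finset.univ.sup fun j => ‖A j‖₊ : NNReal) : ℝ), NNReal.coe_nonneg _, fun j => ?_⟩
  have : ‖A j‖₊ ≤ Finset.univ.sup fun j => ‖A j‖₊ := Finset.le_sup (f := fun j => ‖A j‖₊) (Finset.mem_univ j)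
  exact_mod_cast this

variable (hg : ∀ x, IsGreatest (Set.range fun j => ⟪A j, x⟫ + B j) (g x))
include hg

lemma ddF_exists_mem (x u : En n) : ∃ j ∈ actF A B g x, ddF hg x u = ⟪A j, u⟫ := by
  obtain ⟨j, hj, hj2⟩ := Finset.exists_mem_eq_sup' (actF_nonempty hg x) (fun j => ⟪A j, u⟫)
  exact ⟨j, hj, hj2⟩

lemma le_ddF {x : En n} {j : κ} (hj : j ∈ actF A B g x) (u : En n) :
    ⟪A j, u⟫ ≤ ddF hg x u := Finset.le_sup' (fun j => (⟪A j, u⟫ : ℝ)) hj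

lemma ddF_isGreatest (x u : En n) :
    IsGreatest {r : ℝ | ∃ j : κ, ⟪A j, x⟫ + B j = g x ∧ r = ⟪A j, u⟫} (ddF hg x u) := by
  constructor
  · obtain ⟨j, hj, hj2⟩ := ddF_exists_mem hg x u
    exact ⟨j, mem_actF.1 hj, hj2⟩
  · rintro r ⟨j, hj, rfl⟩
    exact le_ddF hg (mem_actF.2 hj) u

lemma ddF_smul {x u : En n} {t : ℝ} (ht : 0 ≤ t) : ddF hg x (t • u) = t * ddF hg x u := by
  apply le_antisymm
  · obtain ⟨j, hj, hj2⟩ := ddF_exists_mem hg x (t • u)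
    rw [hj2, real_inner_smul_right]
    exact mul_le_mul_of_nonneg_left (le_ddF hg hj u) ht
  · obtain ⟨j, hj, hj2⟩ := ddF_exists_mem hg x u
    rw [hj2, ← real_inner_smul_right]
    exact le_ddF hg hj _

lemma ddF_le_bound {C : ℝ} (hC : ∀ j : κ, ‖A j‖ ≤ C) (x u : En n) :
    ddF hg x u ≤ C * ‖u‖ := by
  obtain ⟨j, hj, hj2⟩ := ddF_exists_mem hg x u
  rw [hj2]
  calc ⟪A j, u⟫ ≤ ‖A j‖ * ‖u‖ := real_inner_le_norm _ _
    _ ≤ C * ‖u‖ := mul_le_mul_of_nonneg_right (hC j) (norm_nonneg _)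

lemma neg_bound_le_ddF {C : ℝ} (hC : ∀ j : κ, ‖A j‖ ≤ C) (x u : En n) :
    -(C * ‖u‖) ≤ ddF hg x u := by
  obtain ⟨j, hj⟩ := actF_nonempty hg x
  refine le_trans ?_ (le_ddF hg hj u)
  have h1 : -(‖A j‖ * ‖u‖) ≤ ⟪A j, u⟫ := neg_le_of_neg_le (by
    have := real_inner_le_norm (A j) (-u)
    simpa [inner_neg_right] using this)
  refine le_trans (neg_le_neg (mul_le_mul_of_nonneg_right (hC j) (norm_nonneg _))) h1

/-- Lipschitz-type bound: `g x ≤ g x' + C ‖x - x'‖`. -/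
lemma lip_bound {C : ℝ} (hC : ∀ j : κ, ‖A j‖ ≤ C) (x x' : En n) :
    g x ≤ g x' + C * ‖x - x'‖ := by
  obtain ⟨j, hj⟩ := actF_nonempty hg x
  have h1 : ⟪A j, x⟫ + B j = g x := mem_actF.1 hj
  have h2 : ⟪A j, x'⟫ + B j ≤ g x' := affine_le hg x' j
  have h3 : ⟪A j, x - x'⟫ ≤ ‖A j‖ * ‖x - x'‖ := real_inner_le_norm _ _
  have h4 : ⟪A j, x - x'⟫ = ⟪A j, x⟫ - ⟪A j, x'⟫ := inner_sub_right _ _ _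
  have h5 : ‖A j‖ * ‖x - x'‖ ≤ C * ‖x - x'‖ :=
    mul_le_mul_of_nonneg_right (hC j) (norm_nonneg _)
  linarith

/-- Local reduction: near `x`, `g (x+u) = g x + ddF x u`. -/
lemma reduction (x : En n) :
    ∃ ρ > (0:ℝ), ∀ u : En n, ‖u‖ < ρ → g (x + u) = g x + ddF hg x u := by
  obtain ⟨C, hC0, hC⟩ := exists_normbound (A := A) (n := n)
  classical
  by_cases hall : ∀ j : κ, j ∈ actF A B g x
  · refine ⟨1, one_pos, fun u _ => ?_⟩
    apply le_antisymm
    · obtain ⟨j', hj'⟩ := actF_nonempty hg (x + u)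
      have h1 : ⟪A j', x + u⟫ + B j' = g (x + u) := mem_actF.1 hj'
      have h2 : ⟪A j', x⟫ + B j' = g x := mem_actF.1 (hall j')
      have h3 : ⟪A j', u⟫ ≤ ddF hg x u := le_ddF hg (hall j') u
      have h4 : ⟪A j', x + u⟫ = ⟪A j', x⟫ + ⟪A j', u⟫ := inner_add_right _ _ _
      linarith
    · obtain ⟨j, hj, hj2⟩ := ddF_exists_mem hg x u
      have h1 : ⟪A j, x⟫ + B j = g x := mem_actF.1 hj
      have h2 : ⟪A j, x + u⟫ + B j ≤ g (x + u) := affine_le hg _ j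
      have h4 : ⟪A j, x + u⟫ = ⟪A j, x⟫ + ⟪A j, u⟫ := inner_add_right _ _ _
      linarith
  · push_neg at hall
    have hS : (Finset.univ.filter (fun j => j ∉ actF A B g x)).Nonempty := by
      obtain ⟨j, hj⟩ := hall
      exact ⟨j, Finset.mem_filter.2 ⟨Finset.mem_univ _, hj⟩⟩
    set S := Finset.univ.filter (fun j => j ∉ actF A B g x) with hSdef
    set δ := S.inf' hS (fun j => g x - (⟪A j, x⟫ + B j)) with hδdef
    have hδpos : 0 < δ := by
      rw [hδdef]
      obtain ⟨j, hjS, hjeq⟩ := Finset.exists_mem_eq_inf' hS (fun j => g x - (⟪A j, x⟫ + B j))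
      rw [hjeq]
      have hle := affine_le hg x j
      have hne : ⟪A j, x⟫ + B j ≠ g x := by
        have := (Finset.mem_filter.1 hjS).2
        simpa [mem_actF] using this
      have : ⟪A j, x⟫ + B j < g x := lt_of_le_of_ne hle hne
      linarith
    refine ⟨δ / (2 * C + 1), by positivity, fun u hu => ?_⟩
    have hunn : (0:ℝ) ≤ ‖u‖ := norm_nonneg _
    have hub : 2 * C * ‖u‖ < δ := by
      have h2C : (0:ℝ) < 2 * C + 1 := by linarith
      have := mul_lt_mul_of_pos_left hu h2C
      have h1 : (2 * C + 1) * (δ / (2 * C + 1)) = δ := by field_simp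
      nlinarith [hu, hunn, hC0]
    apply le_antisymm
    · obtain ⟨j', hj'⟩ := actF_nonempty hg (x + u)
      have h1 : ⟪A j', x + u⟫ + B j' = g (x + u) := mem_actF.1 hj'
      have h4 : ⟪A j', x + u⟫ = ⟪A j', x⟫ + ⟪A j', u⟫ := inner_add_right _ _ _
      by_cases hact : j' ∈ actF A B g x
      · have h2 : ⟪A j', x⟫ + B j' = g x := mem_actF.1 hact
        have h3 : ⟪A j', u⟫ ≤ ddF hg x u := le_ddF hg hact u
        linarith
      · have hj'S : j' ∈ S := Finset.mem_filter.2 ⟨Finset.mem_univ _, hact⟩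
        have h2 : δ ≤ g x - (⟪A j', x⟫ + B j') := Finset.inf'_le _ hj'S
        have h3 : ⟪A j', u⟫ ≤ C * ‖u‖ := by
          calc ⟪A j', u⟫ ≤ ‖A j'‖ * ‖u‖ := real_inner_le_norm _ _
            _ ≤ C * ‖u‖ := mul_le_mul_of_nonneg_right (hC j') hunn
        have h5 : -(C * ‖u‖) ≤ ddF hg x u := neg_bound_le_ddF hg hC x u
        linarith
    · obtain ⟨j, hj, hj2⟩ := ddF_exists_mem hg x u
      have h1 : ⟪A j, x⟫ + B j = g x := mem_actF.1 hj
      have h2 : ⟪A j, x + u⟫ + B j ≤ g (x + u) := affine_le hg _ j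
      have h4 : ⟪A j, x + u⟫ = ⟪A j, x⟫ + ⟪A j, u⟫ := inner_add_right _ _ _
      linarith

/-- convexity segment inequality -/
lemma segment_le (x z : En n) {t : ℝ} (ht0 : 0 ≤ t) (ht1 : t ≤ 1) :
    g (x + t • (z - x)) - g x ≤ t * (g z - g x) := by
  obtain ⟨j, hj⟩ := actF_nonempty hg (x + t • (z - x))
  have h1 : ⟪A j, x + t • (z - x)⟫ + B j = g (x + t • (z - x)) := mem_actF.1 hj
  have h2 : ⟪A j, x⟫ + B j ≤ g x := affine_le hg x j
  have h3 : ⟪A j, z⟫ + B j ≤ g z := affine_le hg z j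
  have h4 : ⟪A j, x + t • (z - x)⟫ = ⟪A j, x⟫ + t * (⟪A j, z⟫ - ⟪A j, x⟫) := by
    rw [inner_add_right, real_inner_smul_right, inner_sub_right]
  have h5 : (1 - t) * (⟪A j, x⟫ + B j) ≤ (1 - t) * g x :=
    mul_le_mul_of_nonneg_left h2 (by linarith)
  have h6 : t * (⟪A j, z⟫ + B j) ≤ t * g z := mul_le_mul_of_nonneg_left h3 ht0
  nlinarith

/-- For a max-affine (convex) function, a Fréchet subgradient is a global subgradient. -/
lemma frechet_global {x v : En n} (hv : v ∈ FSubdiff g x) :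
    ∀ z : En n, g x + ⟪v, z - x⟫ ≤ g z := by
  intro z
  by_cases hzx : z = x
  · simp [hzx]
  have hnz : (0:ℝ) < ‖z - x‖ := by
    rw [norm_pos_iff, sub_ne_zero]; exact hzx
  have key : ∀ ε > (0:ℝ), ⟪v, z - x⟫ - ε * ‖z - x‖ ≤ g z - g x := by
    intro ε hε
    have hev := hv ε hε
    rw [Metric.eventually_nhds_iff] at hev
    obtain ⟨r, hr, hball⟩ := hev
    set t : ℝ := min 1 (r / (2 * ‖z - x‖)) with htdef
    have ht0 : 0 < t := lt_min one_pos (by positivity)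
    have ht1 : t ≤ 1 := min_le_left _ _
    have hw : dist (x + t • (z - x)) x < r := by
      rw [dist_eq_norm, add_sub_cancel_left, norm_smul, Real.norm_eq_abs,
        abs_of_pos ht0]
      have : t ≤ r / (2 * ‖z - x‖) := min_le_right _ _
      calc t * ‖z - x‖ ≤ (r / (2 * ‖z - x‖)) * ‖z - x‖ :=
            mul_le_mul_of_nonneg_right this (norm_nonneg _)
        _ = r / 2 := by field_simp
        _ < r := by linarith
    have hineq := hball hw
    rw [add_sub_cancel_left] at hineq
    have hseg := segment_le hg x z (le_of_lt ht0) ht1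
    have hinner : ⟪v, t • (z - x)⟫ = t * ⟪v, z - x⟫ := real_inner_smul_right _ _ _
    have hnorm : ‖t • (z - x)‖ = t * ‖z - x‖ := by
      rw [norm_smul, Real.norm_eq_abs, abs_of_pos ht0]
    rw [hinner, hnorm] at hineq
    -- hineq : g (x + t•(z-x)) - g x - t * ⟪v,z-x⟫ ≥ -ε * (t * ‖z-x‖)
    have : t * (⟪v, z - x⟫ - ε * ‖z - x‖) ≤ t * (g z - g x) := by nlinarith
    exact le_of_mul_le_mul_left this ht0
  by_contra hcon
  push_neg at hcon
  set ε := (⟪v, z - x⟫ - (g z - g x)) / (2 * ‖z - x‖) with hεdef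
  have hεpos : 0 < ε := div_pos (by linarith) (by positivity)
  have := key ε hεpos
  rw [hεdef] at this
  have h2 : (⟪v, z - x⟫ - (g z - g x)) / (2 * ‖z - x‖) * ‖z - x‖
      = (⟪v, z - x⟫ - (g z - g x)) / 2 := by field_simp
  rw [h2] at this
  linarith

/-- Global subgradient is a Fréchet subgradient. -/
lemma global_frechet {x v : En n} (hv : ∀ z : En n, g x + ⟪v, z - x⟫ ≤ g z) :
    v ∈ FSubdiff g x := by
  intro ε hε
  filter_upwards with w
  have h1 := hv w
  have h2 : -ε * ‖w - x‖ ≤ 0 := by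
    have : (0:ℝ) ≤ ε * ‖w - x‖ := mul_nonneg (le_of_lt hε) (norm_nonneg _)
    linarith
  linarith

/-- the subgradient inequality in all directions, against `ddF`. -/
lemma inner_le_ddF {x v : En n} (hv : ∀ z : En n, g x + ⟪v, z - x⟫ ≤ g z)
    (w : En n) : ⟪v, w⟫ ≤ ddF hg x w := by
  obtain ⟨ρ, hρ, hred⟩ := reduction hg x
  set s : ℝ := ρ / (2 * (‖w‖ + 1)) with hsdef
  have hs0 : 0 < s := by positivity
  have hsw : ‖s • w‖ < ρ := by
    rw [norm_smul, Real.norm_eq_abs, abs_of_pos hs0, hsdef]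
    have h1 : ‖w‖ < ‖w‖ + 1 := by linarith
    have h2 : ρ / (2 * (‖w‖ + 1)) * ‖w‖ < ρ / (2 * (‖w‖ + 1)) * (‖w‖ + 1) :=
      mul_lt_mul_of_pos_left h1 (by positivity)
    have h3 : ρ / (2 * (‖w‖ + 1)) * (‖w‖ + 1) = ρ / 2 := by field_simp
    linarith
  have h1 := hv (x + s • w)
  rw [add_sub_cancel_left, real_inner_smul_right] at h1
  rw [hred _ hsw, ddF_smul hg (le_of_lt hs0)] at h1
  have : s * ⟪v, w⟫ ≤ s * ddF hg x w := by linarith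
  exact le_of_mul_le_mul_left this hs0

/-- Transfer of global subgradients between two points with identical active sets. -/
lemma transfer {x1 x2 v : En n} (h12 : actF A B g x1 = actF A B g x2)
    (hv : ∀ z : En n, g x1 + ⟪v, z - x1⟫ ≤ g z) :
    ∀ z : En n, g x2 + ⟪v, z - x2⟫ ≤ g z := by
  have hdd : ddF hg x1 (x1 - x2) = g x1 - g x2 := by
    have hval : ∀ j ∈ actF A B g x1, ⟪A j, x1 - x2⟫ = g x1 - g x2 := by
      intro j hj
      have h1 : ⟪A j, x1⟫ + B j = g x1 := mem_actF.1 hj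
      have h2 : ⟪A j, x2⟫ + B j = g x2 := mem_actF.1 (h12 ▸ hj)
      have h3 : ⟪A j, x1 - x2⟫ = ⟪A j, x1⟫ - ⟪A j, x2⟫ := inner_sub_right _ _ _
      linarith
    obtain ⟨j, hj, hj2⟩ := ddF_exists_mem hg x1 (x1 - x2)
    rw [hj2, hval j hj]
  have hkey : ⟪v, x1 - x2⟫ ≤ g x1 - g x2 := by
    have := inner_le_ddF hg hv (x1 - x2)
    rw [hdd] at this; exact this
  intro z
  have h1 := hv z
  have h2 : ⟪v, z - x1⟫ = ⟪v, z - x2⟫ - ⟪v, x1 - x2⟫ := by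
    rw [← inner_sub_right]
    congr 1
    abel
  linarith

/-- Sequential continuity from the Lipschitz bound. -/
lemma tendsto_of_seq {x : ℕ → En n} {x0 : En n} (hx : Tendsto x atTop (𝓝 x0)) :
    Tendsto (fun k => g (x k)) atTop (𝓝 (g x0)) := by
  obtain ⟨C, hC0, hC⟩ := exists_normbound (A := A) (n := n)
  rw [← tendsto_sub_nhds_zero_iff]
  apply squeeze_zero_norm (a := fun k => C * ‖x k - x0‖)
  · intro k
    rw [Real.norm_eq_abs, abs_le]
    constructor
    · have h1 := lip_bound hg hC x0 (x k)
      have h2 : C * ‖x0 - x k‖ = C * ‖x k - x0‖ := by rw [norm_sub_rev]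
      linarith
    · linarith [lip_bound hg hC (x k) x0]
  · have h1 : Tendsto (fun k => ‖x k - x0‖) atTop (𝓝 0) := by
      rw [← tendsto_sub_nhds_zero_iff] at hx
      simpa using hx.norm
    simpa using h1.const_mul C


end PAaux

/-- for a piecewise affine min–max function
`f = min_i max_j (⟪a i j, ·⟫ + b i j)`, the union over unit `p` with `f'(xb;p) > 0` of
`⋂_{i ∈ I(xb,p)} Argmax_{v ∈ ∂f_i(xb)} ⟪v,p⟫` equals the outer limit of Fréchet
subdifferentials of `f` along `x → xb`, `f x > f xb` (no closure needed). -/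
theorem union_eq_outerLim_piecewise_affine {n : ℕ} {ι : Type*} [Fintype ι]
    {κ : ι → Type*} [∀ i, Fintype (κ i)]
    (a : (i : ι) → κ i → En n) (b : (i : ι) → κ i → ℝ)
    (fi : ι → En n → ℝ)
    (hfi : ∀ (i : ι) (x : En n),
      IsGreatest (Set.range fun j : κ i => ⟪a i j, x⟫ + b i j) (fi i x))
    (f : En n → ℝ)
    (hf : ∀ x : En n, IsLeast (Set.range fun i => fi i x) (f x))
    (X : Set (En n)) (hX : IsOpen X) (xb : En n) (hxb : xb ∈ X)
    (di : ι → En n → ℝ)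
    (hdi : ∀ (i : ι) (p : En n),
      IsGreatest {r : ℝ | ∃ j : κ i, ⟪a i j, xb⟫ + b i j = fi i xb ∧ r = ⟪a i j, p⟫}
        (di i p)) :
    {y : En n | ∃ p : En n, ‖p‖ = 1 ∧
        (∀ i : ι, fi i xb = f xb → 0 < di i p) ∧
        (∀ i : ι,
          (fi i xb = f xb ∧ ∀ i' : ι, fi i' xb = f xb → di i p ≤ di i' p) →
            y ∈ FSubdiff (fi i) xb ∧ ⟪y, p⟫ = di i p)} = OuterLim f xb := by
  classical
  -- basic facts
  have hle : ∀ (x : En n) (i : ι), f x ≤ fi i x := fun x i => (hf x).2 ⟨i, rfl⟩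
  have hex : ∀ x : En n, ∃ i, fi i x = f x := fun x => (hf x).1
  obtain ⟨i00, hi00⟩ := hex xb
  haveI hιne : Nonempty ι := ⟨i00⟩
  have hddi : ∀ (i : ι) (p : En n), PAaux.ddF (hfi i) xb p = di i p := fun i p =>
    IsGreatest.unique (PAaux.ddF_isGreatest (hfi i) xb p) (hdi i p)
  -- global norm bound
  choose Ci hCi0 hCi using fun i : ι => PAaux.exists_normbound (A := a i)
  set Cg : ℝ := Finset.univ.sup' Finset.univ_nonempty Ci with hCgdef
  have hCg : ∀ (i : ι) (j : κ i), ‖a i j‖ ≤ Cg := fun i j =>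
    le_trans (hCi i j) (Finset.le_sup' Ci (Finset.mem_univ i))
  have hCg0 : 0 ≤ Cg := le_trans (hCi0 i00) (Finset.le_sup' Ci (Finset.mem_univ i00))
  -- active index set at xb
  set Ib : Finset ι := Finset.univ.filter (fun i => fi i xb = f xb) with hIbdef
  have hIbmem : ∀ i : ι, i ∈ Ib ↔ fi i xb = f xb := by
    intro i; simp [hIbdef]
  have hIbne : Ib.Nonempty := ⟨i00, (hIbmem _).2 hi00⟩
  set m : En n → ℝ := fun u => Ib.inf' hIbne (fun i => PAaux.ddF (hfi i) xb u) with hmdef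
  -- Lipschitz bound for f
  have hlipf : ∀ x x' : En n, f x ≤ f x' + Cg * ‖x - x'‖ := by
    intro x x'
    obtain ⟨i, hi⟩ := hex x'
    calc f x ≤ fi i x := hle x i
      _ ≤ fi i x' + Cg * ‖x - x'‖ := PAaux.lip_bound (hfi i) (hCg i) x x'
      _ = f x' + Cg * ‖x - x'‖ := by rw [hi]
  -- the fundamental local expansion of f near xb
  have hFex : ∃ ρ > (0:ℝ), ∀ u : En n, ‖u‖ < ρ →
      (∀ i, fi i (xb + u) = fi i xb + PAaux.ddF (hfi i) xb u) ∧
      f (xb + u) = f xb + m u ∧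
      (∀ i, fi i (xb + u) = f (xb + u) ↔ (i ∈ Ib ∧ PAaux.ddF (hfi i) xb u = m u)) := by
    choose ρi hρi hredi using fun i : ι => PAaux.reduction (hfi i) xb
    have hδex : ∃ δ > (0:ℝ), ∀ i, i ∉ Ib → f xb + δ ≤ fi i xb := by
      by_cases hT : (Finset.univ.filter (fun i : ι => i ∉ Ib)).Nonempty
      · refine ⟨(Finset.univ.filter (fun i : ι => i ∉ Ib)).inf' hT (fun i => fi i xb - f xb),
          ?_, ?_⟩
        · obtain ⟨i, hiT, hieq⟩ := Finset.exists_mem_eq_inf' hT (fun i => fi i xb - f xb)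
          rw [hieq]
          have h1 : i ∉ Ib := (Finset.mem_filter.1 hiT).2
          have h2 : fi i xb ≠ f xb := by
            intro h; exact h1 ((hIbmem i).2 h)
          have := hle xb i
          have h3 : f xb < fi i xb := lt_of_le_of_ne this (Ne.symm h2)
          linarith
        · intro i hi
          have hmem : i ∈ Finset.univ.filter (fun i : ι => i ∉ Ib) :=
            Finset.mem_filter.2 ⟨Finset.mem_univ i, hi⟩
          have h2 : (Finset.univ.filter (fun i : ι => i ∉ Ib)).inf' hT
              (fun i => fi i xb - f xb) ≤ fi i xb - f xb :=
            Finset.inf'_le _ hmem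
          linarith
      · refine ⟨1, one_pos, fun i hi => absurd ?_ hT⟩
        exact ⟨i, Finset.mem_filter.2 ⟨Finset.mem_univ _, hi⟩⟩
    obtain ⟨δ, hδ, hδle⟩ := hδex
    set ρ0 : ℝ := Finset.univ.inf' Finset.univ_nonempty ρi with hρ0def
    have hρ0pos : 0 < ρ0 := by
      obtain ⟨i, _, hieq⟩ := Finset.exists_mem_eq_inf' Finset.univ_nonempty ρi
      rw [hρ0def, hieq]; exact hρi i
    refine ⟨min ρ0 (δ / (2 * Cg + 1)), lt_min hρ0pos (by positivity), fun u hu => ?_⟩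
    have hu0 : ‖u‖ < ρ0 := lt_of_lt_of_le hu (min_le_left _ _)
    have hred : ∀ i, fi i (xb + u) = fi i xb + PAaux.ddF (hfi i) xb u := fun i =>
      hredi i u (lt_of_lt_of_le hu0 (Finset.inf'_le _ (Finset.mem_univ i)))
    have hunn : (0:ℝ) ≤ ‖u‖ := norm_nonneg _
    have huδ : 2 * Cg * ‖u‖ < δ := by
      have h1 : ‖u‖ < δ / (2 * Cg + 1) := lt_of_lt_of_le hu (min_le_right _ _)
      rw [lt_div_iff₀ (by positivity)] at h1
      nlinarith
    have hmle : ∀ i, i ∈ Ib → m u ≤ PAaux.ddF (hfi i) xb u := fun i hi =>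
      Finset.inf'_le _ hi
    have hmbound : m u ≤ Cg * ‖u‖ := by
      obtain ⟨i1, hi1, hieq⟩ := Finset.exists_mem_eq_inf' hIbne
        (fun i => PAaux.ddF (hfi i) xb u)
      have : m u = PAaux.ddF (hfi i1) xb u := hieq
      rw [this]
      exact PAaux.ddF_le_bound (hfi i1) (hCg i1) xb u
    have key1 : f (xb + u) ≤ f xb + m u := by
      obtain ⟨i1, hi1, hieq⟩ := Finset.exists_mem_eq_inf' hIbne
        (fun i => PAaux.ddF (hfi i) xb u)
      have h1 : m u = PAaux.ddF (hfi i1) xb u := hieq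
      have h2 : fi i1 xb = f xb := (hIbmem i1).1 hi1
      calc f (xb + u) ≤ fi i1 (xb + u) := hle _ i1
        _ = fi i1 xb + PAaux.ddF (hfi i1) xb u := hred i1
        _ = f xb + m u := by rw [h2, h1]
    have key2 : ∀ i, i ∉ Ib → f xb + m u < fi i (xb + u) := by
      intro i hi
      have h1 := hδle i hi
      have h2 : -(Cg * ‖u‖) ≤ PAaux.ddF (hfi i) xb u :=
        PAaux.neg_bound_le_ddF (hfi i) (hCg i) xb u
      have h3 := hred i
      nlinarith [hmbound]
    have keyeq : f (xb + u) = f xb + m u := by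
      refine le_antisymm key1 ?_
      obtain ⟨i0, hi0⟩ := hex (xb + u)
      by_cases hiIb : i0 ∈ Ib
      · have h1 : fi i0 xb = f xb := (hIbmem i0).1 hiIb
        have h2 := hmle i0 hiIb
        have h3 := hred i0
        linarith
      · have := key2 i0 hiIb
        linarith
    refine ⟨hred, keyeq, fun i => ⟨fun hact => ?_, fun ⟨hiIb, hddm⟩ => ?_⟩⟩
    · by_cases hiIb : i ∈ Ib
      · refine ⟨hiIb, ?_⟩
        have h1 : fi i xb = f xb := (hIbmem i).1 hiIb
        have h2 := hred i
        rw [keyeq] at hact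
        linarith
      · exfalso
        have := key2 i hiIb
        rw [hact, keyeq] at this
        linarith
    · have h1 : fi i xb = f xb := (hIbmem i).1 hiIb
      rw [keyeq, hred i, h1, hddm]
  -- min-structure: sufficient condition for Fréchet subgradient of f
  have h4b : ∀ (x v : En n),
      (∀ i, fi i x = f x → ∀ z, fi i x + ⟪v, z - x⟫ ≤ fi i z) → v ∈ FSubdiff f x := by
    intro x v hv ε hε
    have hev : ∀ i : ι, ∀ᶠ w in 𝓝 x, f x + ⟪v, w - x⟫ - ε * ‖w - x‖ ≤ fi i w := by
      intro i
      by_cases hact : fi i x = f x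
      · filter_upwards with w
        have h1 := hv i hact w
        have h2 : 0 ≤ ε * ‖w - x‖ := mul_nonneg hε.le (norm_nonneg _)
        rw [hact] at h1
        linarith
      · have hgap : f x < fi i x := lt_of_le_of_ne (hle x i) (Ne.symm hact)
        have hball : Metric.ball x ((fi i x - f x) / (Cg + ‖v‖ + 1)) ∈ 𝓝 x :=
          Metric.ball_mem_nhds _ (div_pos (by linarith) (by positivity))
        filter_upwards [hball] with w hw
        rw [Metric.mem_ball, dist_eq_norm] at hw
        have h1 : fi i x ≤ fi i w + Cg * ‖x - w‖ := PAaux.lip_bound (hfi i) (hCg i) x w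
        have h2 : ⟪v, w - x⟫ ≤ ‖v‖ * ‖w - x‖ := real_inner_le_norm _ _
        have h3 : Cg * ‖x - w‖ = Cg * ‖w - x‖ := by rw [norm_sub_rev]
        have h4 : (Cg + ‖v‖) * ‖w - x‖ < fi i x - f x := by
          have h5 : (0:ℝ) < Cg + ‖v‖ + 1 := by positivity
          rw [lt_div_iff₀ h5] at hw
          nlinarith [norm_nonneg (w - x), norm_nonneg v]
        have h6 : 0 ≤ ε * ‖w - x‖ := mul_nonneg hε.le (norm_nonneg _)
        nlinarith [norm_nonneg (w - x)]
    have hall : ∀ᶠ w in 𝓝 x, ∀ i : ι, f x + ⟪v, w - x⟫ - ε * ‖w - x‖ ≤ fi i w :=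
      eventually_all.2 hev
    filter_upwards [hall] with w hw
    obtain ⟨iw, hiw⟩ := hex w
    have := hw iw
    rw [hiw] at this
    linarith
  -- min-structure: Fréchet subgradient of f is one of each active piece
  have h4a : ∀ (x v : En n) (i : ι), fi i x = f x → v ∈ FSubdiff f x →
      v ∈ FSubdiff (fi i) x := by
    intro x v i hact hv ε hε
    filter_upwards [hv ε hε] with w hw
    have h1 : f w ≤ fi i w := hle w i
    have h2 : fi i x = f x := hact
    -- hw : f w - f x - ⟪v, w - x⟫ ≥ -ε * ‖w - x‖
    have : fi i w - fi i x - ⟪v, w - x⟫ ≥ f w - f x - ⟪v, w - x⟫ := by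
      rw [h2]; linarith
    linarith
  -- now the set equality
  ext y
  simp only [Set.mem_setOf_eq]
  constructor
  · -- easy inclusion: the union is contained in the outer limit
    rintro ⟨p, hp1, hp2, hp3⟩
    obtain ⟨ρ, hρ, hF⟩ := hFex
    have hinfpos : 0 < Ib.inf' hIbne (fun i => di i p) := by
      obtain ⟨i1, hi1, hieq⟩ := Finset.exists_mem_eq_inf' hIbne (fun i => di i p)
      rw [hieq]
      exact hp2 i1 ((hIbmem i1).1 hi1)
    set t : ℕ → ℝ := fun k => ρ / 2 * (1 / (k + 1)) with htdef
    have ht0 : ∀ k, 0 < t k := fun k => by positivity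
    have htρ : ∀ k, ‖(t k) • p‖ < ρ := by
      intro k
      rw [norm_smul, Real.norm_eq_abs, abs_of_pos (ht0 k), hp1, mul_one]
      have h1 : (1:ℝ) / (k + 1) ≤ 1 := by
        rw [div_le_one (by positivity)]
        have : (0:ℝ) ≤ (k:ℝ) := Nat.cast_nonneg k
        linarith
      have h2 : t k ≤ ρ / 2 * 1 := mul_le_mul_of_nonneg_left h1 (by positivity)
      have : t k ≤ ρ / 2 := by linarith
      linarith
    have hsm : ∀ (i : ι) (k : ℕ), PAaux.ddF (hfi i) xb ((t k) • p) = t k * di i p := by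
      intro i k
      rw [PAaux.ddF_smul (hfi i) (ht0 k).le, hddi]
    have hmtk : ∀ k, m ((t k) • p) = t k * Ib.inf' hIbne (fun i => di i p) := by
      intro k
      apply le_antisymm
      · obtain ⟨i1, hi1, hieq⟩ := Finset.exists_mem_eq_inf' hIbne (fun i => di i p)
        have h1 : m ((t k) • p) ≤ PAaux.ddF (hfi i1) xb ((t k) • p) :=
          Finset.inf'_le _ hi1
        rw [hsm i1 k] at h1
        rw [← hieq] at h1
        exact h1
      · obtain ⟨i2, hi2, hieq⟩ := Finset.exists_mem_eq_inf' hIbne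
          (fun i => PAaux.ddF (hfi i) xb ((t k) • p))
        have h1 : m ((t k) • p) = PAaux.ddF (hfi i2) xb ((t k) • p) := hieq
        rw [h1, hsm i2 k]
        exact mul_le_mul_of_nonneg_left (Finset.inf'_le _ hi2) (ht0 k).le
    refine ⟨fun k => xb + (t k) • p, fun _ => y, ?_, ?_, ?_, tendsto_const_nhds⟩
    · have h1 : Tendsto t atTop (𝓝 0) := by
        have := tendsto_one_div_add_atTop_nhds_zero_nat.const_mul (ρ / 2)
        simpa [htdef] using this
      have h2 : Tendsto (fun k => (t k) • p) atTop (𝓝 (0 : En n)) := by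
        simpa using h1.smul_const p
      simpa using tendsto_const_nhds.add h2
    · intro k
      have h1 := (hF _ (htρ k)).2.1
      rw [h1, hmtk k]
      have := mul_pos (ht0 k) hinfpos
      linarith
    · intro k
      apply h4b
      intro i hact z
      have hiff := ((hF _ (htρ k)).2.2 i).1 hact
      obtain ⟨hiIb, hddm⟩ := hiff
      rw [hsm i k, hmtk k] at hddm
      have hdieq : di i p = Ib.inf' hIbne (fun i => di i p) :=
        mul_left_cancel₀ (ne_of_gt (ht0 k)) hddm
      have hmin : ∀ i' : ι, fi i' xb = f xb → di i p ≤ di i' p := by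
        intro i' hi'
        rw [hdieq]
        exact Finset.inf'_le _ ((hIbmem i').2 hi')
      obtain ⟨hysub, hyp⟩ := hp3 i ⟨(hIbmem i).1 hiIb, hmin⟩
      have hglob := PAaux.frechet_global (hfi i) hysub
      have h1 : fi i (xb + (t k) • p) = fi i xb + t k * di i p := by
        rw [(hF _ (htρ k)).1 i, hsm i k]
      have h2 : ⟪y, z - (xb + (t k) • p)⟫ = ⟪y, z - xb⟫ - t k * di i p := by
        have h3 : z - (xb + (t k) • p) = (z - xb) - (t k) • p := by abel
        rw [h3, inner_sub_right, real_inner_smul_right, hyp]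
      rw [h1, h2]
      have := hglob z
      linarith
  · -- hard inclusion: the outer limit is contained in the union
    rintro ⟨xk, yk, hxk, hfk, hyk, hyklim⟩
    obtain ⟨ρ, hρ, hF⟩ := hFex
    -- extract a subsequence with constant activity pattern
    set P : ℕ → ((ι → Bool) × ((i : ι) → κ i → Bool)) :=
      fun k => (fun i => decide (fi i (xk k) = f (xk k)),
                fun i j => decide (⟪a i j, xk k⟫ + b i j = fi i (xk k))) with hPdef
    have hfin : ∃ c, ∃ᶠ k in atTop, P k = c := by
      by_contra hcon
      push_neg at hcon
      have h1 : ∀ c, ∀ᶠ k in atTop, P k ≠ c := fun c => hcon c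
      have h2 : ∀ᶠ k in atTop, ∀ c, P k ≠ c := eventually_all.2 h1
      obtain ⟨k, hk⟩ := h2.exists
      exact hk (P k) rfl
    obtain ⟨c, hc⟩ := hfin
    obtain ⟨φ, hφ, hφP⟩ := Filter.extraction_of_frequently_atTop hc
    set x' : ℕ → En n := fun k => xk (φ k) with hx'def
    set y' : ℕ → En n := fun k => yk (φ k) with hy'def
    have hx' : Tendsto x' atTop (𝓝 xb) := hxk.comp hφ.tendsto_atTop
    have hy' : Tendsto y' atTop (𝓝 y) := hyklim.comp hφ.tendsto_atTop
    have hf' : ∀ k, f xb < f (x' k) := fun k => hfk (φ k)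
    have hsub' : ∀ k, y' k ∈ FSubdiff f (x' k) := fun k => hyk (φ k)
    have hPact : ∀ k i, (fi i (x' k) = f (x' k)) ↔ c.1 i = true := by
      intro k i
      have h1 : decide (fi i (xk (φ k)) = f (xk (φ k))) = c.1 i :=
        congrFun (congrArg Prod.fst (hφP k)) i
      constructor
      · intro h; rw [← h1]; exact decide_eq_true h
      · intro h; rw [← h1] at h; exact of_decide_eq_true h
    have hPactj : ∀ k i (j : κ i), (⟪a i j, x' k⟫ + b i j = fi i (x' k)) ↔ c.2 i j = true := by
      intro k i j
      have h1 : decide (⟪a i j, xk (φ k)⟫ + b i j = fi i (xk (φ k))) = c.2 i j :=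
        congrFun (congrFun (congrArg Prod.snd (hφP k)) i) j
      constructor
      · intro h; rw [← h1]; exact decide_eq_true h
      · intro h; rw [← h1] at h; exact of_decide_eq_true h
    have hactconst : ∀ k k' i, PAaux.actF (a i) (b i) (fi i) (x' k)
        = PAaux.actF (a i) (b i) (fi i) (x' k') := by
      intro k k' i
      ext j
      rw [PAaux.mem_actF, PAaux.mem_actF, hPactj k i j, hPactj k' i j]
    have hcfi : ∀ i, Tendsto (fun k => fi i (x' k)) atTop (𝓝 (fi i xb)) := fun i =>
      PAaux.lip_tendsto (PAaux.lip_bound (hfi i) (hCg i)) hx'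
    have hcf : Tendsto (fun k => f (x' k)) atTop (𝓝 (f xb)) :=
      PAaux.lip_tendsto hlipf hx'
    have hA_Ib : ∀ i, c.1 i = true → fi i xb = f xb := by
      intro i hi
      have h1 : (fun k => fi i (x' k)) = (fun k => f (x' k)) :=
        funext fun k => (hPact k i).2 hi
      exact tendsto_nhds_unique (h1 ▸ hcfi i) hcf
    have hSG : ∀ k i, c.1 i = true → ∀ z, fi i (x' k) + ⟪y' k, z - x' k⟫ ≤ fi i z :=
      fun k i hi => PAaux.frechet_global (hfi i)
        (h4a (x' k) (y' k) i ((hPact k i).2 hi) (hsub' k))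
    -- pick K with x' K close to xb
    obtain ⟨K, hK⟩ := (hx'.eventually (Metric.ball_mem_nhds xb hρ)).exists
    rw [dist_eq_norm] at hK
    set u : En n := x' K - xb with hudef
    have hxbu : xb + u = x' K := by rw [hudef]; abel
    have hu : ‖u‖ < ρ := hK
    obtain ⟨hred, hfeq, hiff⟩ := hF u hu
    have hmu : 0 < m u := by
      have h1 := hf' K
      rw [← hxbu, hfeq] at h1
      linarith
    have hune : u ≠ 0 := by
      intro h
      have h1 := hf' K
      rw [← hxbu, h, add_zero] at h1
      exact lt_irrefl _ h1
    have ht0 : (0:ℝ) < ‖u‖ := norm_pos_iff.2 hune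
    refine ⟨‖u‖⁻¹ • u, ?_, ?_, ?_⟩
    · rw [norm_smul, Real.norm_eq_abs, abs_of_pos (inv_pos.2 ht0),
        inv_mul_cancel₀ (ne_of_gt ht0)]
    · -- positivity of all active directional derivatives
      intro i hib
      have h1 : m u ≤ PAaux.ddF (hfi i) xb u := Finset.inf'_le _ ((hIbmem i).2 hib)
      have h2 : di i (‖u‖⁻¹ • u) = ‖u‖⁻¹ * PAaux.ddF (hfi i) xb u := by
        rw [← hddi, PAaux.ddF_smul (hfi i) (inv_pos.2 ht0).le]
      rw [h2]
      exact mul_pos (inv_pos.2 ht0) (lt_of_lt_of_le hmu h1)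
    · -- the argmin condition
      rintro i ⟨hib, hmin⟩
      have hsmul : ∀ i' : ι, di i' (‖u‖⁻¹ • u) = ‖u‖⁻¹ * PAaux.ddF (hfi i') xb u := by
        intro i'
        rw [← hddi, PAaux.ddF_smul (hfi i') (inv_pos.2 ht0).le]
      -- i attains the minimum of dd over Ib
      have h3 : PAaux.ddF (hfi i) xb u = m u := by
        refine le_antisymm ?_ (Finset.inf'_le _ ((hIbmem i).2 hib))
        obtain ⟨i1, hi1, hieq⟩ := Finset.exists_mem_eq_inf' hIbne
          (fun i' => PAaux.ddF (hfi i') xb u)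
        have h4 := hmin i1 ((hIbmem i1).1 hi1)
        rw [hsmul i, hsmul i1] at h4
        have h5 : PAaux.ddF (hfi i) xb u ≤ PAaux.ddF (hfi i1) xb u :=
          (mul_le_mul_iff_right₀ (inv_pos.2 ht0)).1 h4
        have h6 : m u = PAaux.ddF (hfi i1) xb u := hieq
        rw [h6]
        exact h5
      -- hence i is active at x' K
      have hact : fi i (xb + u) = f (xb + u) := (hiff i).2 ⟨(hIbmem i).2 hib, h3⟩
      rw [hxbu] at hact
      have hciA : c.1 i = true := (hPact K i).1 hact
      -- y is a global subgradient of fi i at x' K (via transfer and limit)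
      have hSGK : ∀ z, fi i (x' K) + ⟪y, z - x' K⟫ ≤ fi i z := by
        intro z
        have hk : ∀ k, fi i (x' K) + ⟪y' k, z - x' K⟫ ≤ fi i z := fun k =>
          PAaux.transfer (hfi i) (hactconst k K i) (hSG k i hciA) z
        have hlim : Tendsto (fun k => fi i (x' K) + ⟪y' k, z - x' K⟫) atTop
            (𝓝 (fi i (x' K) + ⟪y, z - x' K⟫)) :=
          tendsto_const_nhds.add (hy'.inner tendsto_const_nhds)
        exact le_of_tendsto hlim (Filter.Eventually.of_forall hk)
      -- y is a global subgradient of fi i at xb (via limits)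
      have hSGb : ∀ z, fi i xb + ⟪y, z - xb⟫ ≤ fi i z := by
        intro z
        have hk : ∀ k, fi i (x' k) + ⟪y' k, z - x' k⟫ ≤ fi i z := fun k =>
          hSG k i hciA z
        have hlim : Tendsto (fun k => fi i (x' k) + ⟪y' k, z - x' k⟫) atTop
            (𝓝 (fi i xb + ⟪y, z - xb⟫)) :=
          (hcfi i).add (hy'.inner (tendsto_const_nhds.sub hx'))
        exact le_of_tendsto hlim (Filter.Eventually.of_forall hk)
      refine ⟨PAaux.global_frechet (hfi i) hSGb, ?_⟩
      have hup : ⟪y, u⟫ = PAaux.ddF (hfi i) xb u := by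
        have hupper : ⟪y, u⟫ ≤ PAaux.ddF (hfi i) xb u := by
          have h7 := hSGb (xb + u)
          rw [add_sub_cancel_left, hred i] at h7
          linarith
        have hlower : PAaux.ddF (hfi i) xb u ≤ ⟪y, u⟫ := by
          have h7 := hSGK xb
          rw [← hxbu] at h7
          have h8 : xb - (xb + u) = -u := by abel
          rw [h8, inner_neg_right, hred i] at h7
          linarith
        linarith
      rw [hsmul i, real_inner_smul_right, hup]
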